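/- Let Z ⊆ W₁ × W₂ be a full relation between finite sets W₁ and W₂ (i.e., every element of W₁ is related to some element of W₂ and every element of W₂ is related to some element of W₁). Then there exists a full relation Z₀ ⊆ Z which is zigzag-free: Z₀ = Z₁ ∪ Z₂ where Z₁ is (the graph of) a partial function, Z₂⁻¹ is (the graph of) a partial function, dom(Z₁) ∩ dom(Z₂) = ∅, and rng(Z₁) ∩ rng(Z₂) = ∅. -/

import Mathlib

/-- Domain of a relation. -/
def rdom {α β : Type*} (Z : Set (α × β)) : Set α := {a | ∃ b, (a, b) ∈ Z}

/-- Range of a relation. -/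
def rrng {α β : Type*} (Z : Set (α × β)) : Set β := {b | ∃ a, (a, b) ∈ Z}

/-- Every full relation between finite sets contains a zigzag-free full subrelation:
`Z₀ = Z₁ ∪ Z₂` where `Z₁` and `Z₂⁻¹` are partial functions with
`dom Z₁ ∩ dom Z₂ = ∅` and `rng Z₁ ∩ rng Z₂ = ∅`. -/
theorem exists_zigzagFree_full_subrelation {W₁ W₂ : Type*} [Finite W₁] [Finite W₂]
    (Z : Set (W₁ × W₂))
    (hdom : rdom Z = Set.univ) (hrng : rrng Z = Set.univ) :
    ∃ Z₀ Z₁ Z₂ : Set (W₁ × W₂),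
      Z₀ ⊆ Z ∧ rdom Z₀ = Set.univ ∧ rrng Z₀ = Set.univ ∧
      Z₀ = Z₁ ∪ Z₂ ∧
      (∀ a b b', (a, b) ∈ Z₁ → (a, b') ∈ Z₁ → b = b') ∧
      (∀ a a' b, (a, b) ∈ Z₂ → (a', b) ∈ Z₂ → a = a') ∧
      rdom Z₁ ∩ rdom Z₂ = ∅ ∧ rrng Z₁ ∩ rrng Z₂ = ∅ := by
  classical
  -- the family of full subrelations of Z
  set 𝒮 : Set (Set (W₁ × W₂)) :=
    {Y | Y ⊆ Z ∧ rdom Y = Set.univ ∧ rrng Y = Set.univ} with h𝒮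
  have hZS : Z ∈ 𝒮 := ⟨subset_rfl, hdom, hrng⟩
  obtain ⟨Z₀, hZ₀S, hmin⟩ :=
    Set.Finite.exists_minimalFor Set.ncard 𝒮 (Set.toFinite 𝒮) ⟨Z, hZS⟩
  obtain ⟨hsub, hd0, hr0⟩ := hZ₀S
  -- minimality: no proper full subrelation of Z₀
  have key : ∀ Y ⊂ Z₀, ¬ (rdom Y = Set.univ ∧ rrng Y = Set.univ) := by
    rintro Y hY ⟨h1, h2⟩
    have hYS : Y ∈ 𝒮 := ⟨hY.1.trans hsub, h1, h2⟩
    have hlt : Y.ncard < Z₀.ncard := Set.ncard_lt_ncard hY (Set.toFinite _)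
    have := hmin (j := Y) hYS hlt.le
    omega
  -- split by degree of left endpoint
  set Z₁ : Set (W₁ × W₂) := {p ∈ Z₀ | ∀ q ∈ Z₀, q.1 = p.1 → q = p} with hZ₁
  set Z₂ : Set (W₁ × W₂) := Z₀ \ Z₁ with hZ₂
  have hfulldom : ∀ a : W₁, ∃ b, (a, b) ∈ Z₀ := by
    intro a
    have : a ∈ rdom Z₀ := hd0 ▸ Set.mem_univ a
    exact this
  have hfullrng : ∀ b : W₂, ∃ a, (a, b) ∈ Z₀ := by
    intro b
    have : b ∈ rrng Z₀ := hr0 ▸ Set.mem_univ b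
    exact this
  -- removing an edge whose endpoints are otherwise covered contradicts minimality
  have remove : ∀ p ∈ Z₀, (∃ q ∈ Z₀, q.1 = p.1 ∧ q ≠ p) →
      (∃ q ∈ Z₀, q.2 = p.2 ∧ q ≠ p) → False := by
    rintro p hp ⟨q1, hq1, hq1a, hq1ne⟩ ⟨q2, hq2, hq2b, hq2ne⟩
    apply key (Z₀ \ {p}) ⟨Set.diff_subset, fun h => (h hp).2 rfl⟩
    constructor
    · ext a
      simp only [Set.mem_univ, iff_true]
      by_cases ha : a = p.1
      · exact ⟨q1.2, by subst ha; exact ⟨hq1a ▸ hq1, by simpa [← hq1a] using hq1ne⟩⟩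
      · obtain ⟨b, hb⟩ := hfulldom a
        exact ⟨b, hb, fun h => ha (congrArg Prod.fst (Set.mem_singleton_iff.mp h))⟩
    · ext b
      simp only [Set.mem_univ, iff_true]
      by_cases hb : b = p.2
      · exact ⟨q2.1, by subst hb; exact ⟨hq2b ▸ hq2, by simpa [← hq2b] using hq2ne⟩⟩
      · obtain ⟨a, ha⟩ := hfullrng b
        exact ⟨a, ha, fun h => hb (congrArg Prod.snd (Set.mem_singleton_iff.mp h))⟩
  refine ⟨Z₀, Z₁, Z₂, hsub, hd0, hr0, ?_, ?_, ?_, ?_, ?_⟩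
  · rw [hZ₂, Set.union_diff_cancel (by rw [hZ₁]; exact Set.sep_subset _ _)]
  · -- Z₁ is a partial function
    rintro a b b' ⟨hb, hub⟩ ⟨hb', _⟩
    have := hub (a, b') hb' rfl
    exact (Prod.mk.injEq .. ▸ this).2.symm
  · -- Z₂⁻¹ is a partial function
    rintro a a' b ⟨hab, hab'⟩ ⟨ha'b, ha'b'⟩
    by_contra hne
    -- (a,b) ∈ Z₂ means a has another edge
    rw [hZ₁] at hab'
    simp only [Set.mem_setOf_eq] at hab'
    push_neg at hab'
    obtain ⟨q, hq, hqa, hqne⟩ := hab' hab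
    exact remove (a, b) hab ⟨q, hq, hqa, hqne⟩
      ⟨(a', b), ha'b, rfl, by simp [Ne.symm hne]⟩
  · -- domains disjoint
    ext a
    simp only [Set.mem_inter_iff, Set.mem_empty_iff_false, iff_false]
    rintro ⟨⟨b, hb, hub⟩, ⟨b₂, hb₂⟩⟩
    rw [hZ₂] at hb₂
    obtain ⟨hb₂0, hb₂n⟩ := hb₂
    apply hb₂n
    have : (a, b₂) = (a, b) := hub (a, b₂) hb₂0 rfl
    rw [this]
    exact ⟨hb, hub⟩
  · -- ranges disjoint
    ext b
    simp only [Set.mem_inter_iff, Set.mem_empty_iff_false, iff_false]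
    rintro ⟨⟨a, ha, hua⟩, ⟨a', ha'⟩⟩
    rw [hZ₂] at ha'
    obtain ⟨ha'0, ha'n⟩ := ha'
    rw [hZ₁] at ha'n
    simp only [Set.mem_setOf_eq] at ha'n
    push_neg at ha'n
    obtain ⟨q, hq, hqa, hqne⟩ := ha'n ha'0
    by_cases hne : a = a'
    · subst hne
      exact hqne (hua q hq hqa)
    · exact remove (a', b) ha'0 ⟨q, hq, hqa, hqne⟩
        ⟨(a, b), ha, rfl, by simp [hne]⟩
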